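/- Let I be an n-element subset of {1, …, 2n} and let σ(k) = 2n+1−k. Then A(e_I) = ± e_{σ(Iᶜ)} (a basis vector up to sign). Moreover σ(Iᶜ) = I if and only if I contains exactly one element of each pair {k, 2n+1−k} for 1 ≤ k ≤ n, and in that case A(e_I) = (−1)^{n+⌊n/2⌋} · e_I. -/

import Mathlib

open Matrix

/-- The set of `n`-element subsets of `{1, …, 2n}` (realized as `Fin (2*n)`), indexing the
standard basis `e_I = e_{i₁} ∧ ⋯ ∧ e_{iₙ}` of the `n`-th exterior power `⋀ⁿ(ℂ^{2n})`. -/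
abbrev Idx (n : ℕ) := {I : Finset (Fin (2 * n)) // I.card = n}

/-- The matrix of the induced linear map `⋀ⁿ(g)` on `⋀ⁿ(ℂ^{2n})` in the standard basis
`{e_I}`: its `(I, J)` entry is the `n × n` minor of `g` with rows `I` and columns `J`
(both taken in increasing order), i.e. the coefficient of `e_I` in `⋀ⁿ(g)(e_J)`. -/
noncomputable def wedgePow (n : ℕ) (g : Matrix (Fin (2 * n)) (Fin (2 * n)) ℂ) :
    Matrix (Idx n) (Idx n) ℂ := fun I J =>
  Matrix.det (Matrix.of fun a b : Fin n =>
    g ((I.1.orderIsoOfFin I.2 a).1) ((J.1.orderIsoOfFin J.2 b).1))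

/-- `qCoeff n I J = q(e_I, e_J)`, the coefficient of `e_1 ∧ ⋯ ∧ e_{2n}` in `e_I ∧ e_J`:
it is `0` unless `J = Iᶜ`, in which case it is the sign `(-1)^{#{(i,j) ∈ I × J : i > j}}`
obtained by sorting the concatenation of the increasing enumerations of `I` and `J`. -/
noncomputable def qCoeff (n : ℕ) (I J : Idx n) : ℂ :=
  if (J : Finset (Fin (2 * n))) = (I : Finset (Fin (2 * n)))ᶜ then
    (-1 : ℂ) ^ (((I.1 ×ˢ J.1).filter fun p => p.2 < p.1).card)
  else 0

/-- The bilinear form `q` on `⋀ⁿ(ℂ^{2n})` defined by `v ∧ w = q(v, w) • e_1 ∧ ⋯ ∧ e_{2n}`,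
written in coordinates with respect to the basis `{e_I}` (a vector of `⋀ⁿ(ℂ^{2n})` is
recorded by its coordinate function `Idx n → ℂ`). -/
noncomputable def q (n : ℕ) (v w : Idx n → ℂ) : ℂ :=
  ∑ I : Idx n, ∑ J : Idx n, v I * w J * qCoeff n I J

/-- The basis vector `e_I` of `⋀ⁿ(ℂ^{2n})`, in coordinates. -/
noncomputable def eVec (n : ℕ) (I : Idx n) : Idx n → ℂ :=
  fun J => if J = I then 1 else 0

/-- The complement `Iᶜ` of an `n`-element subset of `{1, …, 2n}`. -/
def complIdx (n : ℕ) (I : Idx n) : Idx n :=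
  ⟨(I : Finset (Fin (2 * n)))ᶜ, by
    rw [Finset.card_compl, I.2, Fintype.card_fin]; omega⟩

/-- The matrix (in the basis `{e_I}`) of the linear map `S` on `⋀ⁿ(ℂ^{2n})` defined by
`S(e_I) = q(e_{Iᶜ}, e_I) • e_{Iᶜ}`. -/
noncomputable def Smat (n : ℕ) : Matrix (Idx n) (Idx n) ℂ := fun I J =>
  if I = complIdx n J then qCoeff n (complIdx n J) J else 0

/-- The `n × n` matrix `w_n` with entries `1` at positions `(i, n+1-i)` and `0` elsewhere. -/
noncomputable def wnMat (n : ℕ) : Matrix (Fin n) (Fin n) ℂ := fun i j =>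
  if (i : ℕ) + (j : ℕ) + 1 = n then 1 else 0

/-- The `2n × 2n` matrix `J_{2n}` with block form `[[0, wₙ], [-wₙ, 0]]`. -/
noncomputable def JMat (n : ℕ) : Matrix (Fin (2 * n)) (Fin (2 * n)) ℂ :=
  Matrix.reindex (finSumFinEquiv.trans (finCongr (by omega)))
    (finSumFinEquiv.trans (finCongr (by omega)))
    (Matrix.fromBlocks 0 (wnMat n) (-(wnMat n)) 0)

/-- The matrix of the endomorphism `A = S ∘ ⋀ⁿ(J_{2n})` of `⋀ⁿ(ℂ^{2n})`. -/
noncomputable def Amat (n : ℕ) : Matrix (Idx n) (Idx n) ℂ :=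
  Smat n * wedgePow n (JMat n)

/-- The image of a subset of `{1, …, 2n}` under the order-reversal `σ(k) = 2n + 1 - k`
(realized on `Fin (2*n)` as `Fin.rev`), applied to the complement `Iᶜ`. -/
def revComplIdx (n : ℕ) (I : Idx n) : Idx n :=
  ⟨((I : Finset (Fin (2 * n)))ᶜ).image Fin.rev, by
    rw [Finset.card_image_of_injective _ Fin.rev_injective, Finset.card_compl, I.2,
      Fintype.card_fin]; omega⟩

-- ===== auxiliary lemmas =====

lemma JMat_apply' (n : ℕ) (i j : Fin (2 * n)) :
    JMat n i j = if (i : ℕ) + (j : ℕ) + 1 = 2 * n then (if (i : ℕ) < n then 1 else -1) else 0 := by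
  have key : ∀ x : Fin (2 * n), (finSumFinEquiv.trans (finCongr (show n + n = 2*n by omega))).symm x
      = if h : (x : ℕ) < n then Sum.inl ⟨x, h⟩ else Sum.inr ⟨(x : ℕ) - n, by omega⟩ := by
    intro x
    rw [Equiv.symm_apply_eq]
    split
    · apply Fin.ext; simp
    · apply Fin.ext; simp; omega
  rw [JMat, Matrix.reindex_apply, Matrix.submatrix_apply, key, key]
  rcases lt_or_ge (i : ℕ) n with hi | hi <;> rcases lt_or_ge (j : ℕ) n with hj | hj
  · rw [dif_pos hi, dif_pos hj]
    simp only [Matrix.fromBlocks_apply₁₁, Matrix.zero_apply]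
    rw [if_neg (by omega)]
  · rw [dif_pos hi, dif_neg (by omega : ¬ (j:ℕ) < n)]
    simp only [Matrix.fromBlocks_apply₁₂, wnMat]
    rw [if_pos hi]
    by_cases h : (i:ℕ) + (j:ℕ) + 1 = 2*n
    · rw [if_pos (by omega), if_pos h]
    · rw [if_neg (by omega), if_neg h]
  · rw [dif_neg (by omega : ¬ (i:ℕ) < n), dif_pos hj]
    simp only [Matrix.fromBlocks_apply₂₁, Matrix.neg_apply, wnMat]
    rw [if_neg (by omega : ¬ (i:ℕ) < n)]
    by_cases h : (i:ℕ) + (j:ℕ) + 1 = 2*n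
    · rw [if_pos (by omega), if_pos h]
    · rw [if_neg (by omega), if_neg h]; simp
  · rw [dif_neg (by omega : ¬ (i:ℕ) < n), dif_neg (by omega : ¬ (j:ℕ) < n)]
    simp only [Matrix.fromBlocks_apply₂₂, Matrix.zero_apply]
    rw [if_neg (by omega)]

lemma wn_det : ∀ n : ℕ, (wnMat n).det = (-1 : ℂ) ^ (n.choose 2) := by
  intro n
  induction n with
  | zero => simp [Matrix.det_fin_zero]
  | succ m ih =>
    rw [Matrix.det_succ_row_zero]
    rw [Finset.sum_eq_single (Fin.last m)]
    · have h1 : wnMat (m+1) 0 (Fin.last m) = 1 := by simp [wnMat]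
      have h2 : ((wnMat (m+1)).submatrix Fin.succ (Fin.last m).succAbove) = wnMat m := by
        ext a b
        rw [Matrix.submatrix_apply, Fin.succAbove_last]
        simp only [wnMat, Fin.val_succ, Fin.coe_castSucc]
        exact if_congr (by omega) rfl rfl
      rw [h1, h2, ih]
      have : (m+1).choose 2 = m + m.choose 2 := by
        rw [Nat.choose_two_right, Nat.choose_two_right]
        rcases m with _ | k
        · simp
        · simp only [Nat.add_sub_cancel]
          have : (k+2) * (k+1) = 2 * (k+1) + (k+1)*k := by ring
          rw [this]
          omega
      rw [this, pow_add]
      simp [Fin.val_last]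
      try ring
    · intro b _ hb
      have : wnMat (m+1) 0 b = 0 := by
        simp only [wnMat]
        rw [if_neg]
        simp only [Fin.val_zero]
        intro h
        exact hb (by apply Fin.ext; simp [Fin.last]; omega)
      rw [this]; ring
    · simp

def revIdx (n : ℕ) (I : Idx n) : Idx n :=
  ⟨I.1.image Fin.rev, by
    rw [Finset.card_image_of_injective _ Fin.rev_injective, I.2]⟩

lemma mem_revIdx {n : ℕ} {I : Idx n} {x : Fin (2*n)} :
    x ∈ (revIdx n I).1 ↔ x.rev ∈ I.1 := by
  simp only [revIdx, Finset.mem_image]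
  constructor
  · rintro ⟨y, hy, rfl⟩; simpa [Fin.rev_rev]
  · intro h; exact ⟨x.rev, h, by simp [Fin.rev_rev]⟩

lemma emb_revIdx {n : ℕ} (I : Idx n) (a : Fin n) :
    (revIdx n I).1.orderEmbOfFin (revIdx n I).2 a
      = Fin.rev (I.1.orderEmbOfFin I.2 a.rev) := by
  have := Finset.orderEmbOfFin_unique (f := fun a : Fin n => Fin.rev (I.1.orderEmbOfFin I.2 a.rev))
    (revIdx n I).2 (fun x => mem_revIdx.2 (by simp [Fin.rev_rev, Finset.orderEmbOfFin_mem]))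
    (fun x y hxy => by
      simp only [Fin.rev_lt_rev]
      exact (I.1.orderEmbOfFin I.2).strictMono (by simpa [Fin.rev_lt_rev] using hxy))
  exact (congrFun this a).symm

lemma wedge_eq_zero {n : ℕ} (I K : Idx n) (hK : K ≠ revIdx n I) :
    wedgePow n (JMat n) K I = 0 := by
  have hns : ¬ K.1 ⊆ (revIdx n I).1 := by
    intro hs
    exact hK (Subtype.ext (Finset.eq_of_subset_of_card_le hs (by rw [K.2, (revIdx n I).2])))
  obtain ⟨r, hrK, hrn⟩ := Finset.not_subset.1 hns
  have hrev : r.rev ∉ I.1 := fun h => hrn (mem_revIdx.2 (by simpa [Fin.rev_rev] using h))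
  set a : Fin n := (K.1.orderIsoOfFin K.2).symm ⟨r, hrK⟩ with ha
  apply Matrix.det_eq_zero_of_row_eq_zero a
  intro b
  have hval : (K.1.orderIsoOfFin K.2 a).1 = r := by rw [ha]; simp
  simp only [Matrix.of_apply, hval, JMat_apply']
  rw [if_neg]
  intro h
  have hb := Finset.orderEmbOfFin_mem I.1 I.2 b
  rw [Finset.coe_orderIsoOfFin_apply] at h
  have : (I.1.orderEmbOfFin I.2 b) = r.rev := by
    apply Fin.ext
    rw [Fin.val_rev]
    omega
  exact hrev (this ▸ hb)

lemma wedge_rev (n : ℕ) (I : Idx n) :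
    wedgePow n (JMat n) (revIdx n I) I
      = (-1 : ℂ) ^ (n.choose 2 + (I.1.filter (fun i : Fin (2*n) => (i : ℕ) < n)).card) := by
  have hM : (Matrix.of fun a b : Fin n =>
      JMat n (((revIdx n I).1.orderIsoOfFin (revIdx n I).2 a).1) ((I.1.orderIsoOfFin I.2 b).1))
      = Matrix.diagonal (fun a : Fin n =>
          if ((I.1.orderEmbOfFin I.2 a.rev : Fin (2*n)) : ℕ) < n then (-1 : ℂ) else 1)
        * wnMat n := by
    ext a b
    rw [Matrix.diagonal_mul]
    simp only [Matrix.of_apply, Finset.coe_orderIsoOfFin_apply, emb_revIdx, JMat_apply', wnMat]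
    set x := I.1.orderEmbOfFin I.2 a.rev with hx
    set y := I.1.orderEmbOfFin I.2 b with hy
    have hxlt : (x : ℕ) < 2 * n := x.2
    have hylt : (y : ℕ) < 2 * n := y.2
    have hrev : ((Fin.rev x : Fin (2*n)) : ℕ) = 2*n - 1 - (x:ℕ) := by rw [Fin.val_rev]; omega
    by_cases hab : (a : ℕ) + (b : ℕ) + 1 = n
    · have hba : b = a.rev := by apply Fin.ext; rw [Fin.val_rev]; omega
      have hxy : (y : ℕ) = (x : ℕ) := by rw [hy, hx, hba]
      rw [if_pos (by omega), if_pos hab, mul_one]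
      rcases lt_or_ge (x : ℕ) n with h | h
      · rw [if_neg (by omega), if_pos h]
      · rw [if_pos (by omega), if_neg (by omega)]
    · have hxy : (y : ℕ) ≠ (x : ℕ) := by
        intro h
        have : b = a.rev := (I.1.orderEmbOfFin I.2).injective (by apply Fin.ext; exact h)
        rw [this, Fin.val_rev] at hab
        omega
      rw [if_neg (by omega), if_neg hab, mul_zero]
  rw [wedgePow, hM, Matrix.det_mul, Matrix.det_diagonal, wn_det]
  have hprod : ∀ a : Fin n, (if ((I.1.orderEmbOfFin I.2 a.rev : Fin (2*n)) : ℕ) < n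
      then (-1 : ℂ) else 1) = (-1 : ℂ) ^ (if ((I.1.orderEmbOfFin I.2 a.rev : Fin (2*n)) : ℕ) < n then 1 else 0) := by
    intro a; split <;> simp
  rw [Finset.prod_congr rfl (fun a _ => hprod a), Finset.prod_pow_eq_pow_sum]
  have hrevsum : ∑ a : Fin n, (if ((I.1.orderEmbOfFin I.2 a.rev : Fin (2*n)) : ℕ) < n then 1 else 0)
      = ∑ a : Fin n, (if ((I.1.orderEmbOfFin I.2 a : Fin (2*n)) : ℕ) < n then 1 else 0) :=
    Fintype.sum_equiv (Fin.revPerm) _ _ (fun a => by simp)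
  rw [hrevsum]
  have hcard : ∑ a : Fin n, (if ((I.1.orderEmbOfFin I.2 a : Fin (2*n)) : ℕ) < n then 1 else 0)
      = (I.1.filter (fun i : Fin (2*n) => (i : ℕ) < n)).card := by
    rw [Finset.card_filter]
    refine Finset.sum_bij (fun a _ => I.1.orderEmbOfFin I.2 a)
      (fun a _ => Finset.orderEmbOfFin_mem _ _ _)
      (fun a _ b _ h => (I.1.orderEmbOfFin I.2).injective h)
      (fun i hi => ⟨(I.1.orderIsoOfFin I.2).symm ⟨i, hi⟩, Finset.mem_univ _, by show (I.1.orderEmbOfFin I.2) _ = i; rw [← Finset.coe_orderIsoOfFin_apply, OrderIso.apply_symm_apply]⟩)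
      (fun a _ => rfl)
  rw [hcard, ← pow_add, Nat.add_comm]

lemma compl_revIdx (n : ℕ) (I : Idx n) : complIdx n (revIdx n I) = revComplIdx n I := by
  apply Subtype.ext
  show ((revIdx n I).1)ᶜ = (I.1ᶜ).image Fin.rev
  ext x
  simp only [Finset.mem_compl, mem_revIdx, Finset.mem_image]
  constructor
  · intro h
    exact ⟨x.rev, h, by simp [Fin.rev_rev]⟩
  · rintro ⟨y, hy, rfl⟩
    simpa [Fin.rev_rev] using hy

lemma Amat_mulVec (n : ℕ) (I : Idx n) :
    (Amat n).mulVec (eVec n I) = fun J => if J = revComplIdx n I then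
      (-1 : ℂ) ^ ((((revComplIdx n I).1 ×ˢ (revIdx n I).1).filter (fun p => p.2 < p.1)).card
        + (n.choose 2 + (I.1.filter (fun i : Fin (2*n) => (i : ℕ) < n)).card)) else 0 := by
  funext J
  have h1 : (Amat n).mulVec (eVec n I) J = Amat n J I := by
    rw [Matrix.mulVec, dotProduct]
    rw [Finset.sum_eq_single I]
    · simp [eVec]
    · intro K _ hK; simp [eVec, hK]
    · intro h; exact absurd (Finset.mem_univ I) h
  rw [h1, Amat, Matrix.mul_apply]
  rw [Finset.sum_eq_single (revIdx n I)]
  · rw [wedge_rev]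
    have hS : Smat n J (revIdx n I) = if J = revComplIdx n I then
        (-1 : ℂ) ^ ((((revComplIdx n I).1 ×ˢ (revIdx n I).1).filter (fun p => p.2 < p.1)).card) else 0 := by
      rw [Smat, compl_revIdx]
      by_cases hJ : J = revComplIdx n I
      · rw [if_pos hJ, if_pos hJ, qCoeff]
        rw [if_pos]
        show (revIdx n I).1 = ((revComplIdx n I).1)ᶜ
        rw [← compl_revIdx]
        show (revIdx n I).1 = (((revIdx n I).1)ᶜ)ᶜ
        rw [compl_compl]
      · rw [if_neg hJ, if_neg hJ]
    rw [hS]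
    by_cases hJ : J = revComplIdx n I
    · rw [if_pos hJ, if_pos hJ, ← pow_add]
    · rw [if_neg hJ, if_neg hJ, zero_mul]
  · intro K _ hK
    rw [wedge_eq_zero I K hK, mul_zero]
  · intro h; exact absurd (Finset.mem_univ _) h

lemma negpow_congr {a b : ℕ} (h : a % 2 = b % 2) : (-1 : ℂ) ^ a = (-1 : ℂ) ^ b := by
  conv_lhs => rw [← Nat.div_add_mod a 2]
  conv_rhs => rw [← Nat.div_add_mod b 2]
  rw [h, pow_add, pow_add, pow_mul, pow_mul]
  norm_num

lemma Rpar : ∀ n : ℕ, (∑ i ∈ Finset.range n, (i + 1)) % 2 = (n + n / 2) % 2 := by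
  intro n
  induction n with
  | zero => simp
  | succ m ih =>
    rw [Finset.sum_range_succ]
    set S := ∑ i ∈ Finset.range m, (i + 1) with hS
    clear hS
    obtain ⟨q, r, hr, rfl⟩ : ∃ q r, r < 2 ∧ m = 2*q+r := ⟨m/2, m%2, by omega, by omega⟩
    interval_cases r <;> omega

lemma mem_revComplIdx {n : ℕ} {I : Idx n} {x : Fin (2*n)} :
    x ∈ (revComplIdx n I).1 ↔ x.rev ∉ I.1 := by
  show x ∈ (I.1ᶜ).image Fin.rev ↔ _
  simp only [Finset.mem_image, Finset.mem_compl]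
  constructor
  · rintro ⟨y, hy, rfl⟩; simpa [Fin.rev_rev]
  · intro h; exact ⟨x.rev, h, by simp [Fin.rev_rev]⟩

lemma parity_main (n : ℕ) (I : Idx n)
    (hsym : ∀ k : Fin (2*n), k ∈ I.1 ↔ k.rev ∉ I.1) :
    (((I.1 ×ˢ (I.1)ᶜ).filter (fun p => p.2 < p.1)).card
      + (n.choose 2 + (I.1.filter (fun i : Fin (2*n) => (i : ℕ) < n)).card)) % 2
    = (n + n / 2) % 2 := by
  classical
  set inv := ((I.1 ×ˢ (I.1)ᶜ).filter (fun p => p.2 < p.1)).card with hinv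
  set C := ((I.1 ×ˢ I.1).filter (fun p => p.2 < p.1)).card with hC
  set m := (I.1.filter (fun i : Fin (2*n) => (i : ℕ) < n)).card with hm
  set T := ∑ i ∈ I.1, (i : ℕ) with hT
  -- (F1) inv + C = T
  have hIio : ∀ i : Fin (2*n), (Finset.univ.filter (fun j : Fin (2*n) => j < i)).card = (i:ℕ) := by
    intro i
    rw [show Finset.univ.filter (fun j : Fin (2*n) => j < i) = Finset.Iio i from by ext; simp,
      Fin.card_Iio]
  have hF1 : inv + C = T := by
    rw [hinv, hC, hT, Finset.card_filter, Finset.card_filter, Finset.sum_product,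
      Finset.sum_product, ← Finset.sum_add_distrib]
    refine Finset.sum_congr rfl (fun i _ => ?_)
    rw [Nat.add_comm, Finset.sum_add_sum_compl I.1 (fun j => if j < i then 1 else 0),
      ← Finset.card_filter, hIio]
  -- (F2) C = n.choose 2
  have hF2 : C = n.choose 2 := by
    have hswap : C = ((I.1 ×ˢ I.1).filter (fun p => p.1 < p.2)).card := by
      refine Finset.card_bij (fun p _ => (p.2, p.1)) ?_ ?_ ?_
      · intro p hp
        simp only [Finset.mem_filter, Finset.mem_product] at hp ⊢
        exact ⟨⟨hp.1.2, hp.1.1⟩, hp.2⟩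
      · intro p hp q hq h
        simp only [Prod.mk.injEq] at h
        exact Prod.ext h.2 h.1
      · intro p hp
        simp only [Finset.mem_filter, Finset.mem_product] at hp
        refine ⟨(p.2, p.1), ?_, rfl⟩
        simp only [Finset.mem_filter, Finset.mem_product]
        exact ⟨⟨hp.1.2, hp.1.1⟩, hp.2⟩
    have hdiag : ((I.1 ×ˢ I.1).filter (fun p => p.1 = p.2)).card = I.1.card := by
      refine Finset.card_bij (fun p _ => p.1) ?_ ?_ ?_
      · intro p hp
        simp only [Finset.mem_filter, Finset.mem_product] at hp
        exact hp.1.1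
      · intro p hp q hq h
        have h' : p.1 = q.1 := h
        simp only [Finset.mem_filter, Finset.mem_product] at hp hq
        exact Prod.ext h' (by rw [← hp.2, ← hq.2, h'])
      · intro i hi
        exact ⟨(i, i), by simp [Finset.mem_filter, Finset.mem_product, hi], rfl⟩
    have hpart : C + (((I.1 ×ˢ I.1).filter (fun p => p.1 < p.2)).card + n) = n * n := by
      have htot := Finset.card_filter_add_card_filter_not
        (s := I.1 ×ˢ I.1) (p := fun p => p.2 < p.1)
      have hneg : ((I.1 ×ˢ I.1).filter (fun p => ¬ p.2 < p.1))
          = ((I.1 ×ˢ I.1).filter (fun p => p.1 < p.2)) ∪ ((I.1 ×ˢ I.1).filter (fun p => p.1 = p.2)) := by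
        rw [← Finset.filter_or]
        refine Finset.filter_congr (fun p _ => ?_)
        constructor
        · intro h; rcases lt_or_eq_of_le (not_lt.1 h) with h' | h'
          · exact Or.inl h'
          · exact Or.inr h'
        · rintro (h | h) <;> simp [not_lt, le_of_lt, h, le_of_eq]
      have hdisj : Disjoint ((I.1 ×ˢ I.1).filter (fun p => p.1 < p.2))
          ((I.1 ×ˢ I.1).filter (fun p => p.1 = p.2)) := by
        rw [Finset.disjoint_left]
        intro p hp hq
        simp only [Finset.mem_filter] at hp hq
        exact absurd hq.2 (ne_of_lt hp.2)
      rw [hneg, Finset.card_union_of_disjoint hdisj, hdiag, I.2] at htot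
      have hcp : (I.1 ×ˢ I.1).card = n * n := by rw [Finset.card_product, I.2]
      rw [hcp] at htot
      exact htot
    have hch : 2 * n.choose 2 + n = n * n := by
      rw [Nat.choose_two_right]
      have he : 2 ∣ n * (n - 1) := by
        rcases Nat.even_or_odd n with h | h
        · exact Dvd.dvd.mul_right h.two_dvd _
        · rcases n with _ | k
          · simp
          · exact Dvd.dvd.mul_left (by simpa [Nat.even_sub, Nat.succ_sub_one] using
              (Nat.Odd.sub_odd h odd_one).two_dvd) _
      rw [Nat.mul_div_cancel' he]
      rcases n with _ | k
      · simp
      · simp only [Nat.succ_sub_one]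
        ring
    rw [← hswap] at hpart
    omega
  -- (F3) parity of T + m
  have hcompl : (I.1)ᶜ = I.1.image Fin.rev := by
    ext x
    simp only [Finset.mem_compl, Finset.mem_image]
    constructor
    · intro h
      have := (hsym x.rev).2 (by simpa [Fin.rev_rev] using h)
      exact ⟨x.rev, this, by simp [Fin.rev_rev]⟩
    · rintro ⟨y, hy, rfl⟩
      exact (hsym y).1 hy
  set g : Fin (2*n) → ℕ := fun i => min (i : ℕ) ((i.rev : Fin (2*n)) : ℕ) + 1 with hg
  have hgrev : ∀ i : Fin (2*n), g i.rev = g i := by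
    intro i
    simp only [hg, Fin.rev_rev]
    rw [Nat.min_comm]
  have hfg : (T + m) % 2 = (∑ i ∈ I.1, g i) % 2 := by
    have hTm : T + m = ∑ i ∈ I.1, ((i : ℕ) + (if (i : ℕ) < n then 1 else 0)) := by
      rw [hT, hm, Finset.card_filter, ← Finset.sum_add_distrib]
    rw [hTm]
    have heven : ∀ i ∈ I.1, (((i : ℕ) + (if (i : ℕ) < n then 1 else 0)) + g i) % 2 = 0 := by
      intro i _
      have h2 : (i : ℕ) < 2 * n := i.2
      have hr : ((i.rev : Fin (2*n)) : ℕ) = 2 * n - ((i:ℕ) + 1) := Fin.val_rev i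
      simp only [hg, hr]
      split <;> omega
    have := Finset.sum_add_distrib (s := I.1)
      (f := fun i : Fin (2*n) => ((i : ℕ) + (if (i : ℕ) < n then 1 else 0))) (g := g)
    have hztot : (∑ i ∈ I.1, (((i : ℕ) + (if (i : ℕ) < n then 1 else 0)) + g i)) % 2 = 0 := by
      rw [Finset.sum_nat_mod]
      rw [Finset.sum_congr rfl heven]
      simp
    rw [this] at hztot
    omega
  have hgsum : ∑ i ∈ (I.1)ᶜ, g i = ∑ i ∈ I.1, g i := by
    rw [hcompl, Finset.sum_image (fun x _ y _ h => Fin.rev_injective h)]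
    exact Finset.sum_congr rfl (fun i _ => hgrev i)
  have huniv : ∑ i : Fin (2*n), g i = 2 * ∑ i ∈ Finset.range n, (i + 1) := by
    have hval : ∀ i : Fin (2*n), g i = min (i : ℕ) (2*n - 1 - (i:ℕ)) + 1 := by
      intro i
      have h2 : (i : ℕ) < 2 * n := i.2
      simp only [hg, Fin.val_rev]
      congr 1
      omega
    rw [Finset.sum_congr rfl (fun i _ => hval i),
      Fin.sum_univ_eq_sum_range (fun i => min i (2*n - 1 - i) + 1) (2*n)]
    rw [show Finset.range (2*n) = Finset.Ico 0 (2*n) from Finset.range_eq_Ico (2*n),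
      ← Finset.sum_Ico_consecutive _ (Nat.zero_le n) (by omega : n ≤ 2*n)]
    have h1 : ∑ i ∈ Finset.Ico 0 n, (min i (2*n - 1 - i) + 1) = ∑ i ∈ Finset.range n, (i + 1) := by
      rw [← Finset.range_eq_Ico]
      refine Finset.sum_congr rfl (fun i hi => ?_)
      have := Finset.mem_range.1 hi
      congr 1
      omega
    have h2 : ∑ i ∈ Finset.Ico n (2*n), (min i (2*n - 1 - i) + 1) = ∑ i ∈ Finset.range n, (i + 1) := by
      rw [Finset.sum_Ico_eq_sum_range]
      rw [show 2*n - n = n by omega]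
      rw [← Finset.sum_range_reflect (fun j => j + 1) n]
      refine Finset.sum_congr rfl (fun k hk => ?_)
      have := Finset.mem_range.1 hk
      have : min (n + k) (2*n - 1 - (n + k)) = n - 1 - k := by omega
      rw [this]
      try omega
    rw [h1, h2]
    try omega
  have hexact : ∑ i ∈ I.1, g i = ∑ i ∈ Finset.range n, (i + 1) := by
    have := Finset.sum_add_sum_compl I.1 g
    omega
  have hR := Rpar n
  omega

/-- For an `n`-element subset `I` of `{1, …, 2n}` and `σ(k) = 2n + 1 - k`:
`A(e_I) = ± e_{σ(Iᶜ)}`; moreover `σ(Iᶜ) = I` iff `I` contains exactly one element of each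
pair `{k, 2n+1-k}`, and in that case `A(e_I) = (-1)^{n + ⌊n/2⌋} • e_I`. -/
theorem Amat_on_basis (n : ℕ) (hn : 1 ≤ n) (I : Idx n) :
    (∃ c : ℂ, (c = 1 ∨ c = -1) ∧
      (Amat n).mulVec (eVec n I) = c • eVec n (revComplIdx n I)) ∧
    (revComplIdx n I = I ↔
      ∀ k : Fin (2 * n), k ∈ (I : Finset (Fin (2 * n))) ↔ k.rev ∉ (I : Finset (Fin (2 * n)))) ∧
    (revComplIdx n I = I →
      (Amat n).mulVec (eVec n I) = ((-1 : ℂ) ^ (n + n / 2)) • eVec n I) := by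
  classical
  have hmv := Amat_mulVec n I
  set E0 : ℕ := (((revComplIdx n I).1 ×ˢ (revIdx n I).1).filter (fun p => p.2 < p.1)).card
      + (n.choose 2 + (I.1.filter (fun i : Fin (2*n) => (i : ℕ) < n)).card) with hE0
  have hpart2 : (revComplIdx n I = I ↔
      ∀ k : Fin (2 * n), k ∈ (I : Finset (Fin (2 * n))) ↔ k.rev ∉ (I : Finset (Fin (2 * n)))) := by
    rw [Subtype.ext_iff, Finset.ext_iff]
    constructor
    · intro h k
      rw [← h ((k : Fin (2*n)))]
      rw [mem_revComplIdx]
    · intro h k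
      rw [mem_revComplIdx, h k]
  refine ⟨⟨(-1 : ℂ) ^ E0, ?_, ?_⟩, hpart2, ?_⟩
  · rcases Nat.even_or_odd E0 with h | h
    · left; exact h.neg_one_pow
    · right; exact h.neg_one_pow
  · rw [hmv]
    funext J
    by_cases hJ : J = revComplIdx n I <;> simp [hJ, eVec]
  · intro hsym'
    have hs := hpart2.mp hsym'
    have hinvol : ∀ K : Idx n, complIdx n (complIdx n K) = K := fun K =>
      Subtype.ext (by show ((K.1)ᶜ)ᶜ = K.1; rw [compl_compl])
    have hrevI : revIdx n I = complIdx n I := by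
      calc revIdx n I = complIdx n (complIdx n (revIdx n I)) := (hinvol _).symm
        _ = complIdx n (revComplIdx n I) := by rw [compl_revIdx]
        _ = complIdx n I := by rw [hsym']
    have hEeq : E0 % 2 = (n + n / 2) % 2 := by
      rw [hE0, hsym', hrevI]
      exact parity_main n I hs
    have hc : (-1 : ℂ) ^ E0 = (-1 : ℂ) ^ (n + n / 2) := negpow_congr hEeq
    rw [hmv, hsym']
    funext J
    by_cases hJ : J = I <;> simp [hJ, eVec, hc]
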